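/- Let (a_ℓ)_{ℓ∈ℕ₀} be a sequence of nonnegative real numbers, 0 < δ < 1, and C ≥ 1 such that ∑_{ℓ'=ℓ}^{ℓ+N} a_{ℓ'}² ≤ C·(N+1)^{1−δ}·a_ℓ² for all ℓ, N ∈ ℕ₀. Then (a_ℓ) is R-linearly convergent, i.e., there exist constants C_lin > 0 and 0 < q_lin < 1 (depending only on C and δ) such that a_{ℓ+n} ≤ C_lin·q_lin^n·a_ℓ for all ℓ, n ∈ ℕ₀. -/

import Mathlib

private lemma sq_pointwise (a : ℕ → ℝ) (δ C : ℝ)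
    (h : ∀ ℓ N : ℕ,
      ∑ i ∈ Finset.range (N + 1), (a (ℓ + i)) ^ 2
        ≤ C * ((N : ℝ) + 1) ^ (1 - δ) * (a ℓ) ^ 2)
    (ℓ n : ℕ) : a (ℓ + n) ^ 2 ≤ C * ((n : ℝ) + 1) ^ (1 - δ) * a ℓ ^ 2 := by
  have h1 := Finset.single_le_sum (f := fun i => a (ℓ + i) ^ 2)
    (fun i _ => sq_nonneg _) (Finset.self_mem_range_succ n)
  exact le_trans h1 (h ℓ n)

private lemma sq_pigeon (a : ℕ → ℝ) (δ C : ℝ)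
    (h : ∀ ℓ N : ℕ,
      ∑ i ∈ Finset.range (N + 1), (a (ℓ + i)) ^ 2
        ≤ C * ((N : ℝ) + 1) ^ (1 - δ) * (a ℓ) ^ 2)
    (ℓ M : ℕ) : ∃ i ≤ M, a (ℓ + i) ^ 2 ≤ C * ((M : ℝ) + 1) ^ (-δ) * a ℓ ^ 2 := by
  by_contra hc
  push_neg at hc
  have hpos : (0:ℝ) < (M:ℝ) + 1 := by positivity
  have hs : ∑ i ∈ Finset.range (M + 1), (C * ((M:ℝ)+1) ^ (-δ) * a ℓ ^ 2)
      < ∑ i ∈ Finset.range (M + 1), a (ℓ + i) ^ 2 := by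
    apply Finset.sum_lt_sum_of_nonempty ⟨0, by simp⟩
    intro i hi
    exact hc i (Nat.lt_succ_iff.mp (Finset.mem_range.mp hi))
  rw [Finset.sum_const, Finset.card_range, nsmul_eq_mul] at hs
  have heq : ((M:ℝ)+1) * (C * ((M:ℝ)+1) ^ (-δ) * a ℓ ^ 2)
      = C * ((M:ℝ)+1) ^ (1-δ) * a ℓ ^ 2 := by
    rw [show (1:ℝ) - δ = 1 + (-δ) by ring, Real.rpow_add hpos, Real.rpow_one]; ring
  have := h ℓ M
  push_cast at hs
  nlinarith [hs, heq]

private lemma stepOnce (a : ℕ → ℝ) (δ C : ℝ) (hδ0 : 0 < δ)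
    (h : ∀ ℓ N : ℕ,
      ∑ i ∈ Finset.range (N + 1), (a (ℓ + i)) ^ 2
        ≤ C * ((N : ℝ) + 1) ^ (1 - δ) * (a ℓ) ^ 2)
    (hC : 1 ≤ C) (e K : ℝ) (hK : 0 ≤ K) (he : 0 ≤ e)
    (B : ∀ ℓ n : ℕ, a (ℓ + n) ^ 2 ≤ K * ((n : ℝ) + 1) ^ e * a ℓ ^ 2) :
    ∀ ℓ n : ℕ, a (ℓ + n) ^ 2 ≤ C * K * ((n : ℝ) + 1) ^ (e - δ) * a ℓ ^ 2 := by
  intro ℓ n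
  obtain ⟨i, hi, hia⟩ := sq_pigeon a δ C h ℓ n
  have h1 : a (ℓ + n) ^ 2 ≤ K * (((n - i : ℕ) : ℝ) + 1) ^ e * a (ℓ + i) ^ 2 := by
    have := B (ℓ + i) (n - i)
    rwa [show ℓ + i + (n - i) = ℓ + n by omega] at this
  have h2 : (((n - i : ℕ) : ℝ) + 1) ^ e ≤ ((n : ℝ) + 1) ^ e := by
    apply Real.rpow_le_rpow (by positivity) _ he
    have : ((n - i : ℕ) : ℝ) ≤ (n : ℝ) := Nat.cast_le.mpr (Nat.sub_le n i)
    linarith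
  have hCpos : (0:ℝ) ≤ C := by linarith
  calc a (ℓ + n) ^ 2 ≤ K * ((n : ℝ) + 1) ^ e * a (ℓ + i) ^ 2 := by
        exact le_trans h1 (mul_le_mul_of_nonneg_right
          (mul_le_mul_of_nonneg_left h2 hK) (sq_nonneg _))
    _ ≤ K * ((n : ℝ) + 1) ^ e * (C * ((n:ℝ)+1) ^ (-δ) * a ℓ ^ 2) := by
        apply mul_le_mul_of_nonneg_left hia
        positivity
    _ = C * K * ((n : ℝ) + 1) ^ (e - δ) * a ℓ ^ 2 := by
        rw [show e - δ = e + (-δ) by ring, Real.rpow_add (by positivity)]; ring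

private lemma iterBound (a : ℕ → ℝ) (δ C : ℝ) (hδ0 : 0 < δ) (hδ1 : δ < 1) (hC : 1 ≤ C)
    (h : ∀ ℓ N : ℕ,
      ∑ i ∈ Finset.range (N + 1), (a (ℓ + i)) ^ 2
        ≤ C * ((N : ℝ) + 1) ^ (1 - δ) * (a ℓ) ^ 2) :
    ∀ k : ℕ, 0 ≤ 1 - ((k : ℝ) + 1) * δ →
      ∀ ℓ n : ℕ, a (ℓ + n) ^ 2 ≤ C ^ (k + 1) * ((n : ℝ) + 1) ^ (1 - ((k : ℝ) + 1) * δ) * a ℓ ^ 2 := by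
  intro k
  induction k with
  | zero =>
      intro _ ℓ n
      have := sq_pointwise a δ C h ℓ n
      norm_num at this ⊢
      convert this using 3 <;> ring
  | succ k ih =>
      intro hk ℓ n
      have hk' : 0 ≤ 1 - ((k : ℝ) + 1) * δ := by push_cast at hk ⊢; nlinarith
      have hstep := stepOnce a δ C hδ0 h hC (1 - ((k:ℝ)+1) * δ) (C ^ (k+1))
        (by positivity) hk' (ih hk') ℓ n
      have he : (1 - ((k:ℝ)+1) * δ) - δ = 1 - (((k+1 : ℕ) : ℝ) + 1) * δ := by push_cast; ring
      have hc : C * C ^ (k+1) = C ^ (k+1+1) := by ring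
      rw [he, hc] at hstep
      exact hstep

/-- Uniform summability of squares with subalgebraic growth implies R-linear
convergence (implicit in the proof of Lemma `summability:criterion`). -/
theorem square_summability_implies_Rlinear
    (a : ℕ → ℝ) (ha : ∀ ℓ, 0 ≤ a ℓ)
    (δ C : ℝ) (hδ0 : 0 < δ) (hδ1 : δ < 1) (hC : 1 ≤ C)
    (h : ∀ ℓ N : ℕ,
      ∑ i ∈ Finset.range (N + 1), (a (ℓ + i)) ^ 2
        ≤ C * ((N : ℝ) + 1) ^ (1 - δ) * (a ℓ) ^ 2) :
    ∃ Clin qlin : ℝ, 0 < Clin ∧ 0 < qlin ∧ qlin < 1 ∧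
      ∀ ℓ n : ℕ, a (ℓ + n) ≤ Clin * qlin ^ n * a ℓ := by
  classical
  -- find first k with negative exponent
  have hex : ∃ k : ℕ, 1 - ((k : ℝ) + 1) * δ < 0 := by
    obtain ⟨m, hm⟩ := exists_nat_gt ((1:ℝ) / δ)
    refine ⟨m, ?_⟩
    have : (1:ℝ) / δ * δ < (m:ℝ) * δ := by
      exact mul_lt_mul_of_pos_right hm hδ0
    rw [div_mul_cancel₀ _ (ne_of_gt hδ0)] at this
    nlinarith
  set Kf := Nat.find hex with hKf
  have hKspec : 1 - ((Kf : ℝ) + 1) * δ < 0 := Nat.find_spec hex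
  have hKne : Kf ≠ 0 := by
    intro h0
    rw [h0] at hKspec
    push_cast at hKspec
    linarith
  obtain ⟨k0, hk0⟩ : ∃ k0, Kf = k0 + 1 := ⟨Kf - 1, by omega⟩
  have hk0lt : ¬ (1 - ((k0 : ℝ) + 1) * δ < 0) := Nat.find_min hex (by omega)
  push_neg at hk0lt
  -- bound with negative exponent -ε
  set ε := ((Kf : ℝ) + 1) * δ - 1 with hε
  have hεpos : 0 < ε := by simp [hε]; linarith
  have B1 := iterBound a δ C hδ0 hδ1 hC h k0 hk0lt
  have B2 := stepOnce a δ C hδ0 h hC (1 - ((k0:ℝ)+1) * δ) (C ^ (k0+1)) (by positivity) hk0lt B1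
  set K₀ := C * C ^ (k0+1) with hK₀
  have hK₀1 : 1 ≤ K₀ := one_le_mul_of_one_le_of_one_le hC (one_le_pow₀ hC)
  have hexpeq : (1 - ((k0:ℝ)+1) * δ) - δ = -ε := by
    rw [hε, hk0]; push_cast; ring
  rw [hexpeq] at B2
  -- choose block length M
  obtain ⟨N, hN⟩ := exists_nat_ge ((2 * K₀) ^ ε⁻¹)
  set M := N + 1 with hM
  have hMpos : (0:ℝ) < (M:ℝ) := by positivity
  have hMε : 2 * K₀ ≤ ((M:ℝ) + 1) ^ ε := by
    have h2K : (0:ℝ) ≤ 2 * K₀ := by linarith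
    calc 2 * K₀ = ((2 * K₀) ^ ε⁻¹) ^ ε := (Real.rpow_inv_rpow h2K (ne_of_gt hεpos)).symm
      _ ≤ ((M:ℝ) + 1) ^ ε := by
          apply Real.rpow_le_rpow (Real.rpow_nonneg h2K _) _ (le_of_lt hεpos)
          push_cast
          have hMN : (M:ℝ) = (N:ℝ) + 1 := by simp [hM]
          linarith
  -- contraction on blocks
  have hcon : ∀ ℓ : ℕ, a (ℓ + M) ^ 2 ≤ (1/2 : ℝ) * a ℓ ^ 2 := by
    intro ℓ
    have hx : (0:ℝ) < ((M:ℝ) + 1) ^ ε := Real.rpow_pos_of_pos (by linarith) _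
    have h1 : K₀ * ((M:ℝ)+1) ^ (-ε) ≤ 1/2 := by
      rw [Real.rpow_neg (by linarith), ← div_eq_mul_inv, div_le_iff₀ hx]
      nlinarith
    calc a (ℓ + M) ^ 2 ≤ K₀ * ((M:ℝ)+1) ^ (-ε) * a ℓ ^ 2 := B2 ℓ M
      _ ≤ (1/2 : ℝ) * a ℓ ^ 2 := mul_le_mul_of_nonneg_right h1 (sq_nonneg _)
  have hiter : ∀ m ℓ : ℕ, a (ℓ + M * m) ^ 2 ≤ (1/2 : ℝ) ^ m * a ℓ ^ 2 := by
    intro m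
    induction m with
    | zero => intro ℓ; simp
    | succ m ih =>
        intro ℓ
        have h1 := hcon (ℓ + M * m)
        have h2 := ih ℓ
        have hidx : ℓ + M * (m + 1) = (ℓ + M * m) + M := by ring
        rw [hidx]
        calc a ((ℓ + M * m) + M) ^ 2 ≤ (1/2 : ℝ) * a (ℓ + M * m) ^ 2 := h1
          _ ≤ (1/2 : ℝ) * ((1/2 : ℝ) ^ m * a ℓ ^ 2) := by linarith
          _ = (1/2 : ℝ) ^ (m + 1) * a ℓ ^ 2 := by ring
  -- assemble
  set qsq := (1/2 : ℝ) ^ ((M:ℝ)⁻¹) with hqsq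
  have hqsq0 : 0 < qsq := Real.rpow_pos_of_pos (by norm_num) _
  have hqsq1 : qsq < 1 := Real.rpow_lt_one (by norm_num) (by norm_num) (by positivity)
  set D := 2 * (C * ((M:ℝ) + 1) ^ (1 - δ)) with hD
  have hDpos : 0 < D := by
    have := Real.rpow_pos_of_pos (show (0:ℝ) < (M:ℝ)+1 by linarith) (1 - δ)
    positivity
  have hkey : ∀ ℓ n : ℕ, a (ℓ + n) ^ 2 ≤ D * qsq ^ n * a ℓ ^ 2 := by
    intro ℓ n
    set m := n / M with hm
    set r := n % M with hr
    have hdm : M * m + r = n := by rw [hm, hr]; exact Nat.div_add_mod n M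
    have hnMm : ℓ + n = (ℓ + r) + M * m := by omega
    have h1 : a (ℓ + n) ^ 2 ≤ (1/2 : ℝ) ^ m * a (ℓ + r) ^ 2 := by
      rw [hnMm]; exact hiter m (ℓ + r)
    have h2 : a (ℓ + r) ^ 2 ≤ C * ((M:ℝ) + 1) ^ (1 - δ) * a ℓ ^ 2 := by
      have hb := sq_pointwise a δ C h ℓ r
      have hrM : ((r:ℝ) : ℝ) + 1 ≤ (M:ℝ) + 1 := by
        have : r ≤ M := le_of_lt (Nat.mod_lt n (by omega))
        have := (Nat.cast_le (α := ℝ)).mpr this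
        linarith
      have hmono : ((r:ℝ) + 1) ^ (1 - δ) ≤ ((M:ℝ) + 1) ^ (1 - δ) :=
        Real.rpow_le_rpow (by positivity) hrM (by linarith)
      calc a (ℓ + r) ^ 2 ≤ C * ((r:ℝ)+1) ^ (1-δ) * a ℓ ^ 2 := hb
        _ ≤ C * ((M:ℝ)+1) ^ (1-δ) * a ℓ ^ 2 := by
            apply mul_le_mul_of_nonneg_right _ (sq_nonneg _)
            exact mul_le_mul_of_nonneg_left hmono (by linarith)
    have h3 : (1/2 : ℝ) ^ m ≤ 2 * qsq ^ n := by
      have hq : qsq ^ n = (1/2 : ℝ) ^ ((M:ℝ)⁻¹ * (n:ℝ)) := by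
        rw [hqsq, ← Real.rpow_natCast ((1/2 : ℝ) ^ ((M:ℝ)⁻¹)) n, ← Real.rpow_mul (by norm_num)]
      have hexp : (M:ℝ)⁻¹ * (n:ℝ) ≤ (m:ℝ) + 1 := by
        rw [inv_mul_le_iff₀ hMpos]
        have hnat : n ≤ M * (m + 1) := by
          have hrM : r < M := by rw [hr]; exact Nat.mod_lt n (by omega)
          have hMe : M * (m + 1) = M * m + M := by ring
          omega
        calc (n:ℝ) ≤ (M * (m+1) : ℕ) := Nat.cast_le.mpr hnat
          _ = (M:ℝ) * ((m:ℝ) + 1) := by push_cast; ring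
      have hle : (1/2 : ℝ) ^ ((m:ℝ) + 1) ≤ (1/2 : ℝ) ^ ((M:ℝ)⁻¹ * (n:ℝ)) :=
        Real.rpow_le_rpow_of_exponent_ge (by norm_num) (by norm_num) hexp
      rw [hq]
      have : (1/2 : ℝ) ^ (m + 1 : ℕ) ≤ (1/2 : ℝ) ^ ((M:ℝ)⁻¹ * (n:ℝ)) := by
        calc (1/2 : ℝ) ^ (m + 1 : ℕ) = (1/2 : ℝ) ^ (((m + 1 : ℕ)):ℝ) := (Real.rpow_natCast _ _).symm
          _ = (1/2 : ℝ) ^ ((m:ℝ) + 1) := by push_cast; ring_nf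
          _ ≤ _ := hle
      have hpow : (1/2 : ℝ) ^ m = 2 * (1/2 : ℝ) ^ (m + 1 : ℕ) := by ring
      rw [hpow]
      linarith
    calc a (ℓ + n) ^ 2 ≤ (1/2 : ℝ) ^ m * (C * ((M:ℝ)+1) ^ (1-δ) * a ℓ ^ 2) := by
          refine le_trans h1 (mul_le_mul_of_nonneg_left h2 (by positivity))
      _ ≤ (2 * qsq ^ n) * (C * ((M:ℝ)+1) ^ (1-δ) * a ℓ ^ 2) := by
          apply mul_le_mul_of_nonneg_right h3
          have := Real.rpow_pos_of_pos (show (0:ℝ) < (M:ℝ)+1 by linarith) (1 - δ)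
          positivity
      _ = D * qsq ^ n * a ℓ ^ 2 := by rw [hD]; ring
  refine ⟨Real.sqrt D, Real.sqrt qsq, Real.sqrt_pos.mpr hDpos, Real.sqrt_pos.mpr hqsq0, ?_, ?_⟩
  · have := Real.sqrt_lt_sqrt (le_of_lt hqsq0) hqsq1
    rwa [Real.sqrt_one] at this
  · intro ℓ n
    have hQpos : 0 ≤ Real.sqrt D * Real.sqrt qsq ^ n := by positivity
    have hsqeq : (Real.sqrt D * Real.sqrt qsq ^ n) ^ 2 = D * qsq ^ n := by
      rw [mul_pow, Real.sq_sqrt hDpos.le, ← pow_mul, mul_comm n 2, pow_mul,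
        Real.sq_sqrt hqsq0.le]
    calc a (ℓ + n) = Real.sqrt (a (ℓ + n) ^ 2) := (Real.sqrt_sq (ha _)).symm
      _ ≤ Real.sqrt ((Real.sqrt D * Real.sqrt qsq ^ n) ^ 2 * a ℓ ^ 2) := by
          apply Real.sqrt_le_sqrt
          rw [hsqeq]
          exact hkey ℓ n
      _ = Real.sqrt D * Real.sqrt qsq ^ n * a ℓ := by
          rw [Real.sqrt_mul (sq_nonneg _), Real.sqrt_sq hQpos, Real.sqrt_sq (ha ℓ)]
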